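/- Let t : ℕ → ℝ satisfy t h ≥ 0 for all h, t h = 0 for h < 5, with (t h) and (h·t h) summable, ∑_h t h = 1 and ∑_h h·t h ≤ 6. If there exists h ≥ 7 with t h > 0, then t 5 > 0. (Theorem 2: a strongly balanced tiling by convex pentagons satisfying ∑_{h≥7} t_h > 0 contains a convex pentagon whose number of adjacents is five.) -/

import Mathlib

/-- Theorem 2: a strongly balanced tiling by convex pentagons with a positive
fraction of tiles having at least 7 adjacents contains a pentagon with exactly
five adjacents. -/
theorem thm2 (t : ℕ → ℝ) (hpos : ∀ h, 0 ≤ t h) (hlow : ∀ h, h < 5 → t h = 0)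
    (hsum : Summable t) (hsum' : Summable fun h : ℕ => (h : ℝ) * t h)
    (htot : ∑' h, t h = 1) (havg : ∑' h : ℕ, (h : ℝ) * t h ≤ 6)
    (hbig : ∃ h, 7 ≤ h ∧ t h > 0) :
    t 5 > 0 := by
  by_contra h5
  have h5' : t 5 = 0 := le_antisymm (not_lt.mp h5) (hpos 5)
  obtain ⟨h0, h07, h0pos⟩ := hbig
  set f : ℕ → ℝ := fun h => ((h : ℝ) - 6) * t h with hf
  have hfsum : Summable f := by
    have := hsum'.sub (hsum.mul_left 6)
    convert this using 2 with h
    · rfl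
    simp [hf]; ring
  have hfnn : ∀ h, 0 ≤ f h := by
    intro h
    rcases lt_or_ge h 5 with hh | hh
    · simp [hf, hlow h hh]
    · rcases eq_or_lt_of_le hh with hh5 | hh6
      · simp [hf, ← hh5, h5']
      · have : (6 : ℝ) ≤ (h : ℝ) := by exact_mod_cast hh6
        exact mul_nonneg (by linarith) (hpos h)
  have hle : f h0 ≤ ∑' h, f h := Summable.le_tsum hfsum h0 fun j _ => hfnn j
  have htsum : ∑' h, f h = (∑' h : ℕ, (h : ℝ) * t h) - 6 := by
    rw [show f = (fun h : ℕ => (h : ℝ) * t h) - (fun h => 6 * t h) by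
      funext h; simp [hf]; ring]
    simp only [Pi.sub_apply]
    rw [Summable.tsum_sub hsum' (hsum.mul_left 6), tsum_mul_left, htot]
    ring
  have hfpos : 0 < f h0 := by
    have : (7 : ℝ) ≤ (h0 : ℝ) := by exact_mod_cast h07
    exact mul_pos (by linarith) h0pos
  linarith
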